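/- Let x₀, y₀ ∈ ℝ with x₀ ≥ 1 and y₀ ≥ 1, and let λ > 0 satisfy λ(x₀ + y₀) = √(1 + λ²(x₀² − 1)) + √(1 + λ²(y₀² − 1)). Then λ = 1. -/
import Mathlib


/-- Key real-variable step in the injectivity of the Pogorelov map: if
x₀, y₀ ≥ 1 and l > 0 satisfies
l(x₀ + y₀) = √(1 + l²(x₀² − 1)) + √(1 + l²(y₀² − 1)), then l = 1. -/
theorem lambda_eq_one (x0 y0 l : ℝ) (hx : 1 ≤ x0) (hy : 1 ≤ y0) (hl : 0 < l)
    (heq : l * (x0 + y0) =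
      Real.sqrt (1 + l ^ 2 * (x0 ^ 2 - 1)) + Real.sqrt (1 + l ^ 2 * (y0 ^ 2 - 1))) :
    l = 1 := by
  have hlx : 0 < l * x0 := by positivity
  have hly : 0 < l * y0 := by positivity
  rcases lt_trichotomy l 1 with h | h | h
  · exfalso
    have h1 : l * x0 < Real.sqrt (1 + l ^ 2 * (x0 ^ 2 - 1)) := by
      rw [show l * x0 = Real.sqrt ((l * x0) ^ 2) by rw [Real.sqrt_sq hlx.le]]
      apply Real.sqrt_lt_sqrt (by positivity)
      nlinarith
    have h2 : l * y0 < Real.sqrt (1 + l ^ 2 * (y0 ^ 2 - 1)) := by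
      rw [show l * y0 = Real.sqrt ((l * y0) ^ 2) by rw [Real.sqrt_sq hly.le]]
      apply Real.sqrt_lt_sqrt (by positivity)
      nlinarith
    nlinarith
  · exact h
  · exfalso
    have h1 : Real.sqrt (1 + l ^ 2 * (x0 ^ 2 - 1)) < l * x0 := by
      rw [Real.sqrt_lt' hlx]
      nlinarith
    have h2 : Real.sqrt (1 + l ^ 2 * (y0 ^ 2 - 1)) < l * y0 := by
      rw [Real.sqrt_lt' hly]
      nlinarith
    nlinarith
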